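/- A Hausdorff Boolean inverse semigroup S is quasi-fundamental if and only if it is fundamental. -/

import Mathlib

/-- An inverse semigroup with zero. -/
class InverseSemigroup0 (S : Type*) extends Semigroup S, Zero S, Star S where
  zero_mul : ∀ s : S, 0 * s = 0
  mul_zero : ∀ s : S, s * 0 = 0
  mul_star_mul_self : ∀ s : S, s * star s * s = s
  star_mul_self_star : ∀ s : S, star s * s * star s = star s
  star_unique : ∀ s t : S, s * t * s = s → t * s * t = t → t = star s

/-- The natural partial order on an inverse semigroup. -/
def NatLe {S : Type*} [InverseSemigroup0 S] (a b : S) : Prop := a = b * star a * a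

/-- Two elements are compatible if `s t*` and `s* t` are idempotent. -/
def Compat {S : Type*} [InverseSemigroup0 S] (s t : S) : Prop :=
  IsIdempotentElem (s * star t) ∧ IsIdempotentElem (star s * t)

/-- A Boolean inverse semigroup: an inverse semigroup with zero whose idempotents form
a (generalized) Boolean algebra (witnessed by the relative complement `\`), possessing
joins of compatible pairs over which multiplication distributes. -/
class BooleanInverseSemigroup0 (S : Type*) extends InverseSemigroup0 S, Max S, SDiff S where
  le_sup_left : ∀ s t : S, Compat s t → NatLe s (s ⊔ t)
  le_sup_right : ∀ s t : S, Compat s t → NatLe t (s ⊔ t)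
  sup_le : ∀ s t u : S, Compat s t → NatLe s u → NatLe t u → NatLe (s ⊔ t) u
  mul_sup : ∀ a s t : S, Compat s t → a * (s ⊔ t) = (a * s) ⊔ (a * t)
  sup_mul : ∀ a s t : S, Compat s t → (s ⊔ t) * a = (s * a) ⊔ (t * a)
  sdiff_idem : ∀ e f : S, IsIdempotentElem e → IsIdempotentElem f → IsIdempotentElem (e \ f)
  sdiff_le : ∀ e f : S, IsIdempotentElem e → IsIdempotentElem f → NatLe (e \ f) e
  sdiff_mul : ∀ e f : S, IsIdempotentElem e → IsIdempotentElem f → (e \ f) * f = 0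
  sdiff_sup : ∀ e f : S, IsIdempotentElem e → IsIdempotentElem f → (e \ f) ⊔ (e * f) = e

variable {S : Type*} [BooleanInverseSemigroup0 S]

/-- The skew difference `s ⊖ t = (s s* \ t t*) s (s* s \ t* t)`. -/
def skewDiff (s t : S) : S :=
  ((s * star s) \ (t * star t)) * s * ((star s * s) \ (star t * t))

/-- The skew addition `s ▽ t = (s ⊖ t) ∨ t`. -/
def skewAdd (s t : S) : S := skewDiff s t ⊔ t

/-- The maximal idempotent-separating congruence `μ`:
`s μ t` iff `s e s* = t e t*` for all idempotents `e`. -/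
def muRel (s t : S) : Prop :=
  ∀ e : S, IsIdempotentElem e → s * e * star s = t * e * star t

/-- `π : S → Q` is an additive projection: zero- and multiplication-preserving, and
preserving joins of compatible pairs. -/
def IsAdditiveProj {S Q : Type*} [BooleanInverseSemigroup0 S] [BooleanInverseSemigroup0 Q]
    (π : S → Q) : Prop :=
  π 0 = 0 ∧ (∀ a b : S, π (a * b) = π a * π b) ∧
    ∀ a b : S, Compat a b → π (a ⊔ b) = π a ⊔ π b

/-- `S` is fundamental: the centralizer of the idempotents consists of idempotents. -/
def Fundamental (S : Type*) [InverseSemigroup0 S] : Prop :=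
  ∀ s : S, (∀ e : S, IsIdempotentElem e → s * e = e * s) → IsIdempotentElem s

/-- `S` is quasi-fundamental: every non-zero element of the centralizer of `E(S)`
lies above some non-zero idempotent. -/
def QuasiFundamental (S : Type*) [InverseSemigroup0 S] : Prop :=
  ∀ s : S, s ≠ 0 → (∀ e : S, IsIdempotentElem e → s * e = e * s) →
    ∃ e : S, e ≠ 0 ∧ IsIdempotentElem e ∧ NatLe e s

/-- An inverse semigroup is Hausdorff if for all `s, t` the order ideal
`s↓ ∩ t↓` is finitely generated. -/
def HausdorffIS (S : Type*) [InverseSemigroup0 S] : Prop :=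
  ∀ s t : S, ∃ F : Finset S,
    {x : S | NatLe x s ∧ NatLe x t} = {x : S | ∃ f ∈ F, NatLe x f}


namespace ISX

open InverseSemigroup0 BooleanInverseSemigroup0

variable {S : Type*} [BooleanInverseSemigroup0 S]

lemma star_star (s : S) : star (star s) = s :=
  (star_unique (star s) s (star_mul_self_star s) (mul_star_mul_self s)).symm

lemma star_idem {e : S} (he : IsIdempotentElem e) : star e = e := by
  have h : e * e * e = e := by rw [he.eq]; exact he.eq
  exact (star_unique e e h h).symm

lemma star_zero : star (0 : S) = 0 := by
  have h : (0:S) * 0 * 0 = 0 := by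
    rw [InverseSemigroup0.zero_mul, InverseSemigroup0.zero_mul]
  exact (star_unique 0 0 h h).symm

lemma idem_mul_star (s : S) : IsIdempotentElem (s * star s) := by
  show s * star s * (s * star s) = s * star s
  rw [← mul_assoc, mul_star_mul_self]

lemma idem_star_mul (s : S) : IsIdempotentElem (star s * s) := by
  show star s * s * (star s * s) = star s * s
  rw [← mul_assoc, star_mul_self_star]

lemma idem_abs {e : S} (he : IsIdempotentElem e) (t : S) : e * (e * t) = e * t := by
  rw [← mul_assoc, he.eq]

lemma idem_mul {e f : S} (he : IsIdempotentElem e) (hf : IsIdempotentElem f) :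
    IsIdempotentElem (e * f) := by
  set x := star (e * f) with hx
  have key1 : e * (f * (x * (e * f))) = e * f := by
    have h := mul_star_mul_self (e * f)
    rw [← hx] at h
    calc e * (f * (x * (e * f))) = e * f * x * (e * f) := by simp only [mul_assoc]
    _ = e * f := h
  have key2 : x * (e * (f * x)) = x := by
    have h := star_mul_self_star (e * f)
    rw [← hx] at h
    calc x * (e * (f * x)) = x * (e * f) * x := by simp only [mul_assoc]
    _ = x := h
  have G1 : (e * f) * (f * (x * e)) * (e * f) = e * f := by
    calc (e * f) * (f * (x * e)) * (e * f) = e * (f * (f * (x * (e * (e * f))))) := by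
          simp only [mul_assoc]
    _ = e * (f * (x * (e * (e * f)))) := by rw [idem_abs hf]
    _ = e * (f * (x * (e * f))) := by rw [idem_abs he]
    _ = e * f := key1
  have G2 : (f * (x * e)) * (e * f) * (f * (x * e)) = f * (x * e) := by
    calc (f * (x * e)) * (e * f) * (f * (x * e))
        = f * (x * (e * (e * (f * (f * (x * e)))))) := by simp only [mul_assoc]
    _ = f * (x * (e * (f * (f * (x * e))))) := by rw [idem_abs he]
    _ = f * (x * (e * (f * (x * e)))) := by rw [idem_abs hf]
    _ = f * (x * (e * (f * x)) * e) := by simp only [mul_assoc]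
    _ = f * (x * e) := by rw [key2]
  have hfxe : f * (x * e) = x := by
    have := star_unique (e * f) (f * (x * e)) G1 G2
    rw [← hx] at this; exact this
  have hxidem : IsIdempotentElem x := by
    show x * x = x
    calc x * x = (f * (x * e)) * (f * (x * e)) := by rw [hfxe]
    _ = f * (x * (e * (f * (x * e)))) := by simp only [mul_assoc]
    _ = f * (x * (e * (f * x)) * e) := by simp only [mul_assoc]
    _ = f * (x * e) := by rw [key2]
    _ = x := hfxe
  have : e * f = x := by
    rw [hx] at hxidem ⊢
    calc e * f = star (star (e * f)) := (star_star _).symm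
    _ = star (e * f) := by rw [star_idem hxidem]
  rw [this]; exact hxidem

lemma idem_comm {e f : S} (he : IsIdempotentElem e) (hf : IsIdempotentElem f) :
    e * f = f * e := by
  have hef := idem_mul he hf
  have hfe := idem_mul hf he
  have G1 : (e * f) * (f * e) * (e * f) = e * f := by
    calc (e * f) * (f * e) * (e * f) = e * (f * (f * (e * (e * f)))) := by
          simp only [mul_assoc]
    _ = e * (f * (e * (e * f))) := by rw [idem_abs hf]
    _ = e * (f * (e * f)) := by rw [idem_abs he]
    _ = (e * f) * (e * f) := by simp only [mul_assoc]
    _ = e * f := hef.eq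
  have G2 : (f * e) * (e * f) * (f * e) = f * e := by
    calc (f * e) * (e * f) * (f * e) = f * (e * (e * (f * (f * e)))) := by
          simp only [mul_assoc]
    _ = f * (e * (f * (f * e))) := by rw [idem_abs he]
    _ = f * (e * (f * e)) := by rw [idem_abs hf]
    _ = (f * e) * (f * e) := by simp only [mul_assoc]
    _ = f * e := hfe.eq
  have := star_unique (e * f) (f * e) G1 G2
  rw [star_idem hef] at this
  exact this.symm

lemma star_mul (a b : S) : star (a * b) = star b * star a := by
  have G1 : (a * b) * (star b * star a) * (a * b) = a * b := by
    calc (a * b) * (star b * star a) * (a * b)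
        = a * ((b * star b) * ((star a * a) * b)) := by simp only [mul_assoc]
    _ = a * ((b * star b) * (star a * a) * b) := by simp only [mul_assoc]
    _ = a * ((star a * a) * (b * star b) * b) := by
          rw [idem_comm (idem_mul_star b) (idem_star_mul a)]
    _ = (a * star a * a) * (b * star b * b) := by simp only [mul_assoc]
    _ = a * b := by rw [mul_star_mul_self, mul_star_mul_self]
  have G2 : (star b * star a) * (a * b) * (star b * star a) = star b * star a := by
    calc (star b * star a) * (a * b) * (star b * star a)
        = star b * ((star a * a) * (b * star b) * star a) := by simp only [mul_assoc]
    _ = star b * ((b * star b) * (star a * a) * star a) := by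
          rw [idem_comm (idem_star_mul a) (idem_mul_star b)]
    _ = (star b * b * star b) * (star a * a * star a) := by simp only [mul_assoc]
    _ = star b * star a := by rw [star_mul_self_star, star_mul_self_star]
  exact (star_unique (a * b) (star b * star a) G1 G2).symm

end ISX


namespace ISX

variable {S : Type*} [BooleanInverseSemigroup0 S]

open InverseSemigroup0 BooleanInverseSemigroup0

lemma natLe_refl (a : S) : NatLe a a := (mul_star_mul_self a).symm

lemma natLe_zero (a : S) : NatLe 0 a := by
  show (0 : S) = a * star 0 * 0
  rw [star_zero, InverseSemigroup0.mul_zero]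

lemma star_idem_star_mul (a : S) : star (star a * a) = star a * a := by
  rw [star_mul, star_star]

lemma le_def {a b : S} (h : NatLe a b) : a = b * (star a * a) := by
  rw [← mul_assoc]; exact h

lemma le_star_eq {a b : S} (h : NatLe a b) : star a = (star a * a) * star b := by
  conv_lhs => rw [le_def h]
  rw [star_mul, star_idem_star_mul]

lemma le_aux {a b : S} (h : NatLe a b) :
    star a * a = (star a * a) * (star b * b) := by
  conv_lhs => rw [le_def h, star_mul, star_idem_star_mul]
  calc (star a * a * star b) * (b * (star a * a))
      = (star a * a) * ((star b * b) * (star a * a)) := by simp only [mul_assoc]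
  _ = (star a * a) * ((star a * a) * (star b * b)) := by
        rw [idem_comm (idem_star_mul b) (idem_star_mul a)]
  _ = (star a * a) * (star a * a) * (star b * b) := by simp only [mul_assoc]
  _ = (star a * a) * (star b * b) := by rw [(idem_star_mul a).eq]

lemma natLe_trans {a b c : S} (hab : NatLe a b) (hbc : NatLe b c) : NatLe a c := by
  show a = c * star a * a
  have key : c * (star a * a) = a :=
    calc c * (star a * a) = c * ((star a * a) * (star b * b)) := by rw [← le_aux hab]
    _ = c * ((star b * b) * (star a * a)) := by
          rw [idem_comm (idem_star_mul a) (idem_star_mul b)]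
    _ = (c * (star b * b)) * (star a * a) := by simp only [mul_assoc]
    _ = b * (star a * a) := by rw [← le_def hbc]
    _ = a := (le_def hab).symm
  rw [mul_assoc]; exact key.symm

lemma natLe_antisymm {a b : S} (hab : NatLe a b) (hba : NatLe b a) : a = b := by
  calc a = b * (star a * a) := le_def hab
  _ = (a * (star b * b)) * (star a * a) := by rw [← le_def hba]
  _ = a * ((star b * b) * (star a * a)) := by simp only [mul_assoc]
  _ = a * ((star a * a) * (star b * b)) := by
        rw [idem_comm (idem_star_mul b) (idem_star_mul a)]
  _ = (a * star a * a) * (star b * b) := by simp only [mul_assoc]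
  _ = a * (star b * b) := by rw [mul_star_mul_self]
  _ = b := (le_def hba).symm

lemma idem_of_le_idem {x e : S} (he : IsIdempotentElem e) (hx : NatLe x e) :
    IsIdempotentElem x := by
  show x * x = x
  have hx' := le_def hx
  calc x * x = (e * (star x * x)) * (e * (star x * x)) := by conv_lhs => rw [hx']
  _
      = e * ((star x * x) * e * (star x * x)) := by simp only [mul_assoc]
  _ = e * (e * (star x * x) * (star x * x)) := by
        rw [idem_comm (idem_star_mul x) he]
  _ = e * e * ((star x * x) * (star x * x)) := by simp only [mul_assoc]
  _ = e * (star x * x) := by rw [he.eq, (idem_star_mul x).eq]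
  _ = x := hx'.symm

lemma idem_le_absorb {f s : S} (hf : IsIdempotentElem f) (h : NatLe f s) :
    s * f = f := by
  have h2 : f = s * star f * f := h
  rw [star_idem hf, mul_assoc, hf.eq] at h2
  exact h2.symm

lemma idem_le_mul_star {f s : S} (hf : IsIdempotentElem f) (h : NatLe f s) :
    NatLe f (s * star s) := by
  show f = s * star s * star f * f
  rw [star_idem hf]
  calc f = s * f := (idem_le_absorb hf h).symm
  _ = s * star s * s * f := by rw [mul_star_mul_self]
  _ = s * star s * (s * f) := by simp only [mul_assoc]
  _ = s * star s * f := by rw [idem_le_absorb hf h]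
  _ = s * star s * (f * f) := by rw [hf.eq]
  _ = s * star s * f * f := by simp only [mul_assoc]

lemma compat_of_le {a b c : S} (ha : NatLe a c) (hb : NatLe b c) : Compat a b := by
  constructor
  · have hg : IsIdempotentElem ((star a * a) * (star b * b)) :=
      idem_mul (idem_star_mul a) (idem_star_mul b)
    have h1 : a * star b = c * ((star a * a) * (star b * b)) * star c := by
      conv_lhs => rw [le_def ha, le_star_eq hb]
      simp only [mul_assoc]
    rw [h1]
    show _ * _ = _
    calc (c * ((star a * a) * (star b * b)) * star c) * (c * ((star a * a) * (star b * b)) * star c)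
        = c * (((star a * a) * (star b * b)) * (star c * c) * ((star a * a) * (star b * b)) * star c) := by
          simp only [mul_assoc]
    _ = c * ((star c * c) * ((star a * a) * (star b * b)) * ((star a * a) * (star b * b)) * star c) := by
          rw [idem_comm hg (idem_star_mul c)]
    _ = c * ((star c * c) * (((star a * a) * (star b * b)) * ((star a * a) * (star b * b))) * star c) := by
          simp only [mul_assoc]
    _ = c * ((star c * c) * ((star a * a) * (star b * b)) * star c) := by rw [hg.eq]
    _ = c * (((star a * a) * (star b * b)) * (star c * c) * star c) := by
          rw [idem_comm (idem_star_mul c) hg]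
    _ = c * ((star a * a) * (star b * b)) * (star c * c * star c) := by simp only [mul_assoc]
    _ = c * ((star a * a) * (star b * b)) * star c := by rw [star_mul_self_star]
  · have h1 : star a * b = (star a * a) * ((star c * c) * (star b * b)) := by
      conv_lhs => rw [le_star_eq ha, le_def hb]
      simp only [mul_assoc]
    rw [h1]
    exact idem_mul (idem_star_mul a) (idem_mul (idem_star_mul c) (idem_star_mul b))

lemma compat_idem {e f : S} (he : IsIdempotentElem e) (hf : IsIdempotentElem f) :
    Compat e f := by
  refine ⟨?_, ?_⟩
  · rw [star_idem hf]; exact idem_mul he hf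
  · rw [star_idem he]; exact idem_mul he hf

lemma compat_zero (x : S) : Compat 0 x := by
  constructor
  · rw [InverseSemigroup0.zero_mul]
    show (0:S) * 0 = 0
    rw [InverseSemigroup0.zero_mul]
  · rw [star_zero, InverseSemigroup0.zero_mul]
    show (0:S) * 0 = 0
    rw [InverseSemigroup0.zero_mul]

lemma zero_sup (x : S) : (0 : S) ⊔ x = x :=
  natLe_antisymm
    (BooleanInverseSemigroup0.sup_le 0 x x (compat_zero x) (natLe_zero x) (natLe_refl x))
    (BooleanInverseSemigroup0.le_sup_right 0 x (compat_zero x))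

/-- Fold of a list by `⊔`. -/
def listSup : List S → S := fun L => L.foldr (· ⊔ ·) 0

lemma listSup_le {u : S} : ∀ L : List S, (∀ x ∈ L, NatLe x u) → NatLe (listSup L) u
  | [], _ => natLe_zero u
  | a :: L, h => by
    have hL : NatLe (listSup L) u := listSup_le L (fun x hx => h x (List.mem_cons_of_mem a hx))
    have ha : NatLe a u := h a List.mem_cons_self
    show NatLe (a ⊔ listSup L) u
    exact BooleanInverseSemigroup0.sup_le a (listSup L) u (compat_of_le ha hL) ha hL

lemma le_listSup {u : S} : ∀ L : List S, (∀ x ∈ L, NatLe x u) →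
    ∀ x ∈ L, NatLe x (listSup L)
  | [], _, x, hx => absurd hx List.not_mem_nil
  | a :: L, h, x, hx => by
    have hL : NatLe (listSup L) u := listSup_le L (fun y hy => h y (List.mem_cons_of_mem a hy))
    have ha : NatLe a u := h a List.mem_cons_self
    have hc : Compat a (listSup L) := compat_of_le ha hL
    rcases List.mem_cons.1 hx with rfl | hx'
    · exact BooleanInverseSemigroup0.le_sup_left x (listSup L) hc
    · exact natLe_trans
        (le_listSup L (fun y hy => h y (List.mem_cons_of_mem a hy)) x hx')
        (BooleanInverseSemigroup0.le_sup_right a (listSup L) hc)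

end ISX

/-- A Hausdorff Boolean inverse semigroup is quasi-fundamental iff it is fundamental. -/
theorem stmt6 (S : Type*) [BooleanInverseSemigroup0 S] (hH : HausdorffIS S) :
    QuasiFundamental S ↔ Fundamental S := by
  constructor
  · intro hQF s hc
    by_cases hs0 : s = 0
    · subst hs0
      show (0 : S) * 0 = 0
      rw [InverseSemigroup0.zero_mul]
    · obtain ⟨F, hF⟩ := hH s (s * star s)
      set L := F.toList with hLdef
      have hmemF : ∀ f ∈ F, NatLe f s ∧ NatLe f (s * star s) := by
        intro f hf
        have hmem : f ∈ {x : S | ∃ g ∈ F, NatLe x g} := ⟨f, hf, ISX.natLe_refl f⟩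
        rw [← hF] at hmem
        exact hmem
      have hLs : ∀ x ∈ L, NatLe x s := fun x hx => (hmemF x (Finset.mem_toList.1 hx)).1
      set m := ISX.listSup L with hmdef
      have hms : NatLe m s := ISX.listSup_le L hLs
      have hmss : NatLe m (s * star s) :=
        ISX.listSup_le L (fun x hx => (hmemF x (Finset.mem_toList.1 hx)).2)
      have hssidem : IsIdempotentElem (s * star s) := ISX.idem_mul_star s
      have hmidem : IsIdempotentElem m := ISX.idem_of_le_idem hssidem hmss
      have hmax : ∀ f : S, IsIdempotentElem f → NatLe f s → NatLe f m := by
        intro f hfI hfs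
        have hmem : f ∈ {x : S | NatLe x s ∧ NatLe x (s * star s)} :=
          ⟨hfs, ISX.idem_le_mul_star hfI hfs⟩
        rw [hF] at hmem
        obtain ⟨g, hgF, hfg⟩ := hmem
        exact ISX.natLe_trans hfg (ISX.le_listSup L hLs g (Finset.mem_toList.2 hgF))
      set d := (s * star s) \ m with hddef
      have hdidem : IsIdempotentElem d :=
        BooleanInverseSemigroup0.sdiff_idem _ _ hssidem hmidem
      have hdm : d * m = 0 := BooleanInverseSemigroup0.sdiff_mul _ _ hssidem hmidem
      have hdsup : d ⊔ ((s * star s) * m) = s * star s :=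
        BooleanInverseSemigroup0.sdiff_sup _ _ hssidem hmidem
      set t := d * s with ht
      have htc : ∀ e : S, IsIdempotentElem e → t * e = e * t := by
        intro e he
        calc t * e = d * (s * e) := by rw [ht, mul_assoc]
        _ = d * (e * s) := by rw [hc e he]
        _ = (d * e) * s := by rw [mul_assoc]
        _ = (e * d) * s := by rw [ISX.idem_comm hdidem he]
        _ = e * t := by rw [ht, mul_assoc]
      have hts : NatLe t s := by
        show t = s * star t * t
        have hstar : star t = star s * d := by
          rw [ht, ISX.star_mul, ISX.star_idem hdidem]
        rw [hstar, ht]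
        have key : s * (star s * d) * (d * s) = d * s :=
          calc s * (star s * d) * (d * s)
              = (s * star s) * (d * (d * s)) := by simp only [mul_assoc]
          _ = (s * star s) * (d * s) := by rw [ISX.idem_abs hdidem]
          _ = ((s * star s) * d) * s := by simp only [mul_assoc]
          _ = (d * (s * star s)) * s := by rw [ISX.idem_comm hssidem hdidem]
          _ = d * (s * star s * s) := by simp only [mul_assoc]
          _ = d * s := by rw [InverseSemigroup0.mul_star_mul_self]
        exact key.symm
      have ht0 : t = 0 := by
        by_contra htne
        obtain ⟨f, hf0, hfI, hft⟩ := hQF t htne htc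
        have hfs : NatLe f s := ISX.natLe_trans hft hts
        have hfm : NatLe f m := hmax f hfI hfs
        have hfm' : m * f = f := ISX.idem_le_absorb hfI hfm
        have hft' : t * f = f := ISX.idem_le_absorb hfI hft
        refine hf0 ?_
        calc f = t * f := hft'.symm
        _ = d * (s * f) := by rw [ht, mul_assoc]
        _ = d * (s * (m * f)) := by rw [hfm']
        _ = d * (s * m * f) := by simp only [mul_assoc]
        _ = d * (m * s * f) := by rw [hc m hmidem]
        _ = (d * m) * (s * f) := by simp only [mul_assoc]
        _ = 0 := by rw [hdm, InverseSemigroup0.zero_mul]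
      have hcompat : Compat d ((s * star s) * m) :=
        ISX.compat_idem hdidem (ISX.idem_mul hssidem hmidem)
      have h1 : s = m * s := by
        calc s = (s * star s) * s := (InverseSemigroup0.mul_star_mul_self s).symm
        _ = (d ⊔ (s * star s) * m) * s := by rw [hdsup]
        _ = (d * s) ⊔ ((s * star s) * m * s) :=
              BooleanInverseSemigroup0.sup_mul s d ((s * star s) * m) hcompat
        _ = 0 ⊔ ((s * star s) * m * s) := by rw [← ht, ht0]
        _ = (s * star s) * m * s := ISX.zero_sup _
        _ = (m * (s * star s)) * s := by rw [ISX.idem_comm hssidem hmidem]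
        _ = m * (s * star s * s) := by simp only [mul_assoc]
        _ = m * s := by rw [InverseSemigroup0.mul_star_mul_self]
      have h2 : s * m = s := by rw [hc m hmidem]; exact h1.symm
      have h3 : m = s * m := by
        have hh : m = s * star m * m := hms
        rw [ISX.star_idem hmidem, mul_assoc, hmidem.eq] at hh
        exact hh
      have hms' : m = s := h3.trans h2
      exact hms' ▸ hmidem
  · intro hFun s hs0 hc
    exact ⟨s, hs0, hFun s hc, ISX.natLe_refl s⟩
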